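/- Let a : ℝ³ → ℝ be C¹ and ζ : ℝ³ → ℝ³ be C¹, and let n = grad d be a C¹ unit vector field near x with div n = −2/Rₘ. Then a·div ζ = a·(nᵀ(Dζ)n) − (2a/Rₘ)(nᵀζ) − (grad_tg a)ᵀ ζ + nᵀ curl(a n × ζ), where grad_tg a = (I − n nᵀ) grad a is the tangential gradient. -/

import Mathlib

open Matrix

noncomputable def grad3 (d : (Fin 3 → ℝ) → ℝ) (x : Fin 3 → ℝ) : Fin 3 → ℝ :=
  fun i => fderiv ℝ d x (Pi.single i 1)

noncomputable def jac (v : (Fin 3 → ℝ) → (Fin 3 → ℝ)) (x : Fin 3 → ℝ) :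
    Matrix (Fin 3) (Fin 3) ℝ :=
  fun i j => fderiv ℝ v x (Pi.single j 1) i

noncomputable def div3 (v : (Fin 3 → ℝ) → (Fin 3 → ℝ)) (x : Fin 3 → ℝ) : ℝ :=
  ∑ i, jac v x i i

noncomputable def curl3 (v : (Fin 3 → ℝ) → (Fin 3 → ℝ)) (x : Fin 3 → ℝ) :
    Fin 3 → ℝ :=
  ![jac v x 2 1 - jac v x 1 2, jac v x 0 2 - jac v x 2 0, jac v x 1 0 - jac v x 0 1]

/-- Tangential gradient of a scalar field a relative to the unit field n:
(I − n nᵀ) grad a. -/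
noncomputable def gradTg (a : (Fin 3 → ℝ) → ℝ) (n : (Fin 3 → ℝ) → (Fin 3 → ℝ))
    (x : Fin 3 → ℝ) : Fin 3 → ℝ :=
  (1 - vecMulVec (n x) (n x)).mulVec (grad3 a x)

lemma jac_eq' {v : (Fin 3 → ℝ) → (Fin 3 → ℝ)} {x : Fin 3 → ℝ}
    (hv : DifferentiableAt ℝ v x) (i j : Fin 3) :
    jac v x i j = fderiv ℝ (fun y => v y i) x (Pi.single j 1) := by
  unfold jac
  rw [fderiv_pi (fun k => differentiableAt_pi.mp hv k)]
  rfl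

lemma fderiv_mul3' {a f g : (Fin 3 → ℝ) → ℝ} {x : Fin 3 → ℝ}
    (ha : DifferentiableAt ℝ a x) (hf : DifferentiableAt ℝ f x)
    (hg : DifferentiableAt ℝ g x) (v : Fin 3 → ℝ) :
    fderiv ℝ (fun y => a y * f y * g y) x v =
      fderiv ℝ a x v * f x * g x + a x * fderiv ℝ f x v * g x
        + a x * f x * fderiv ℝ g x v := by
  rw [fderiv_fun_mul (ha.fun_mul hf) hg, fderiv_fun_mul ha hf]
  simp
  ring

lemma key' {a : (Fin 3 → ℝ) → ℝ} {n ζ : (Fin 3 → ℝ) → (Fin 3 → ℝ)} {x : Fin 3 → ℝ}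
    (ha : DifferentiableAt ℝ a x) (hn : DifferentiableAt ℝ n x)
    (hζ : DifferentiableAt ℝ ζ x) (p q j : Fin 3) :
    fderiv ℝ (fun y => a y * n y p * ζ y q - a y * n y q * ζ y p) x (Pi.single j 1)
      = fderiv ℝ a x (Pi.single j 1) * (n x p * ζ x q - n x q * ζ x p)
        + a x * (jac n x p j * ζ x q + n x p * jac ζ x q j
            - jac n x q j * ζ x p - n x q * jac ζ x p j) := by
  have hnp := differentiableAt_pi.mp hn
  have hζp := differentiableAt_pi.mp hζ
  rw [fderiv_fun_sub ((ha.fun_mul (hnp p)).fun_mul (hζp q)) ((ha.fun_mul (hnp q)).fun_mul (hζp p))]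
  simp only [ContinuousLinearMap.sub_apply]
  rw [fderiv_mul3' ha (hnp p) (hζp q), fderiv_mul3' ha (hnp q) (hζp p),
    jac_eq' hn, jac_eq' hn, jac_eq' hζ, jac_eq' hζ]
  ring

lemma tangency' {n : (Fin 3 → ℝ) → (Fin 3 → ℝ)} {x : Fin 3 → ℝ} {U : Set (Fin 3 → ℝ)}
    (hn : DifferentiableAt ℝ n x) (hU : IsOpen U) (hxU : x ∈ U)
    (hunit : ∀ y ∈ U, ∑ i, (n y i) ^ 2 = 1) (j : Fin 3) :
    n x 0 * jac n x 0 j + n x 1 * jac n x 1 j + n x 2 * jac n x 2 j = 0 := by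
  have hnp := differentiableAt_pi.mp hn
  have hfun : (fun y => ∑ i, (n y i) ^ 2) = fun y => ∑ i, n y i * n y i := by
    funext y; simp [sq]
  have heq : (fun y => ∑ i, (n y i) ^ 2) =ᶠ[nhds x] (fun _ => (1:ℝ)) :=
    Filter.eventuallyEq_of_mem (hU.mem_nhds hxU) hunit
  have h0 : fderiv ℝ (fun y => ∑ i, (n y i) ^ 2) x (Pi.single j 1) = 0 := by
    rw [heq.fderiv_eq]; simp
  rw [hfun, fderiv_fun_sum (fun i _ => (hnp i).fun_mul (hnp i))] at h0
  simp only [ContinuousLinearMap.sum_apply] at h0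
  have hm : ∀ i : Fin 3, fderiv ℝ (fun y => n y i * n y i) x (Pi.single j 1)
      = 2 * (n x i * jac n x i j) := by
    intro i
    rw [fderiv_fun_mul (hnp i) (hnp i), jac_eq' hn]
    simp
    ring
  simp only [hm, Fin.sum_univ_three] at h0
  linarith

/-- Lemma (A1):  a div ζ = a nᵀ(Dζ)n − (2a/Rₘ) nᵀζ − (grad_tg a)ᵀζ + nᵀ curl(a n × ζ). -/
theorem surface_divergence_lemma (d : (Fin 3 → ℝ) → ℝ) (hd : ContDiff ℝ 2 d)
    (a : (Fin 3 → ℝ) → ℝ) (ha : ContDiff ℝ 1 a)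
    (ζ n : (Fin 3 → ℝ) → (Fin 3 → ℝ)) (hζ : ContDiff ℝ 1 ζ)
    (hngrad : n = grad3 d) (hn : ContDiff ℝ 1 n)
    (x : Fin 3 → ℝ) (U : Set (Fin 3 → ℝ)) (hU : IsOpen U) (hxU : x ∈ U)
    (hunit : ∀ y ∈ U, ∑ i, (n y i) ^ 2 = 1)
    (Rm : ℝ) (hRm : Rm ≠ 0) (hdiv : div3 n x = -2 / Rm) :
    a x * div3 ζ x =
      a x * ∑ i, n x i * (jac ζ x).mulVec (n x) i
        - (2 * a x / Rm) * ∑ i, n x i * ζ x i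
        - ∑ i, gradTg a n x i * ζ x i
        + ∑ i, n x i * curl3 (fun y => crossProduct (a y • n y) (ζ y)) x i := by
  have ha' : DifferentiableAt ℝ a x := (ha.differentiable one_ne_zero) x
  have hn' : DifferentiableAt ℝ n x := (hn.differentiable one_ne_zero) x
  have hζ' : DifferentiableAt ℝ ζ x := (hζ.differentiable one_ne_zero) x
  have hnp := differentiableAt_pi.mp hn'
  have hζp := differentiableAt_pi.mp hζ'
  set w : (Fin 3 → ℝ) → (Fin 3 → ℝ) := fun y => crossProduct (a y • n y) (ζ y) with hwdef
  have hw0 : (fun y => w y 0) = fun y => a y * n y 1 * ζ y 2 - a y * n y 2 * ζ y 1 := by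
    funext y; simp [hwdef, cross_apply, mul_assoc, mul_sub]
  have hw1 : (fun y => w y 1) = fun y => a y * n y 2 * ζ y 0 - a y * n y 0 * ζ y 2 := by
    funext y; simp [hwdef, cross_apply, mul_assoc, mul_sub]
  have hw2 : (fun y => w y 2) = fun y => a y * n y 0 * ζ y 1 - a y * n y 1 * ζ y 0 := by
    funext y; simp [hwdef, cross_apply, mul_assoc, mul_sub]
  have hwd0 : DifferentiableAt ℝ (fun y => w y 0) x := by
    rw [hw0]
    exact ((ha'.mul (hnp 1)).mul (hζp 2)).sub ((ha'.mul (hnp 2)).mul (hζp 1))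
  have hwd1 : DifferentiableAt ℝ (fun y => w y 1) x := by
    rw [hw1]
    exact ((ha'.mul (hnp 2)).mul (hζp 0)).sub ((ha'.mul (hnp 0)).mul (hζp 2))
  have hwd2 : DifferentiableAt ℝ (fun y => w y 2) x := by
    rw [hw2]
    exact ((ha'.mul (hnp 0)).mul (hζp 1)).sub ((ha'.mul (hnp 1)).mul (hζp 0))
  have hwd : DifferentiableAt ℝ w x := by
    rw [differentiableAt_pi]
    intro k
    fin_cases k
    · exact hwd0
    · exact hwd1
    · exact hwd2
  have h21 := key' ha' hn' hζ' (x := x) 0 1 1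
  rw [← hw2, ← jac_eq' hwd 2 1] at h21
  have h12 := key' ha' hn' hζ' (x := x) 2 0 2
  rw [← hw1, ← jac_eq' hwd 1 2] at h12
  have h02 := key' ha' hn' hζ' (x := x) 1 2 2
  rw [← hw0, ← jac_eq' hwd 0 2] at h02
  have h20 := key' ha' hn' hζ' (x := x) 0 1 0
  rw [← hw2, ← jac_eq' hwd 2 0] at h20
  have h10 := key' ha' hn' hζ' (x := x) 2 0 0
  rw [← hw1, ← jac_eq' hwd 1 0] at h10
  have h01 := key' ha' hn' hζ' (x := x) 1 2 1
  rw [← hw0, ← jac_eq' hwd 0 1] at h01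
  have ht0 := tangency' hn' hU hxU hunit 0
  have ht1 := tangency' hn' hU hxU hunit 1
  have ht2 := tangency' hn' hU hxU hunit 2
  have hu' : n x 0 ^ 2 + n x 1 ^ 2 + n x 2 ^ 2 = 1 := by
    simpa [Fin.sum_univ_three] using hunit x hxU
  have hd2 : jac n x 0 0 + jac n x 1 1 + jac n x 2 2 = -2 / Rm := by
    simpa [div3, Fin.sum_univ_three] using hdiv
  simp [div3, curl3, gradTg, grad3, Matrix.mulVec, dotProduct, Matrix.sub_apply,
    Matrix.one_apply, Matrix.vecMulVec_apply, Fin.sum_univ_three, Matrix.cons_val_zero,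
    Matrix.cons_val_one, Matrix.head_cons, Matrix.cons_val_two, Matrix.tail_cons,
    Pi.sub_apply]
  rw [h21, h12, h02, h20, h10, h01]

  linear_combination
    (-(a x * (jac ζ x 0 0 + jac ζ x 1 1 + jac ζ x 2 2)
        + (fderiv ℝ a x (Pi.single 0 1) * ζ x 0 + fderiv ℝ a x (Pi.single 1 1) * ζ x 1
          + fderiv ℝ a x (Pi.single 2 1) * ζ x 2))) * hu'
    + (-(a x * ζ x 0)) * ht0 + (-(a x * ζ x 1)) * ht1 + (-(a x * ζ x 2)) * ht2
    + (a x * (n x 0 * ζ x 0 + n x 1 * ζ x 1 + n x 2 * ζ x 2)) * hd2
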